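/- Let γ > 0 and N be the solution operator of v'' − γv − v³ + w = 0 on (0,∞). Then ∫₀^∞ w · Nw dx ≥ 0 for every w ∈ H^1(0,∞), and ∫₀^∞ (w₁ − w₂)(Nw₁ − Nw₂) dx ≥ 0 for all w₁, w₂ ∈ H^1(0,∞); i.e. N is a monotone operator in the L² pairing. -/

import Mathlib

open MeasureTheory Set Filter

lemma mulInt {μ : Measure ℝ} {f g : ℝ → ℝ} (hf : MemLp f 2 μ) (hg : MemLp g 2 μ) :
    Integrable (fun x => f x * g x) μ := by
  have h : MemLp (f • g) 1 μ := hg.smul hf (hpqr := ⟨by simp [ENNReal.inv_two_add_inv_two, one_div]⟩)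
  rw [memLp_one_iff_integrable] at h
  exact h

lemma key (γ : ℝ) (hγ : 0 ≤ γ) (f u u' u'' p : ℝ → ℝ)
    (hd : ∀ x ∈ Ici (0:ℝ), HasDerivAt u (u' x) x)
    (hd' : ∀ x ∈ Ici (0:ℝ), HasDerivAt u' (u'' x) x)
    (heq : ∀ x ∈ Ici (0:ℝ), u'' x = γ * u x + p x - f x)
    (hp : ContinuousOn p (Ici (0:ℝ)))
    (hpu : ∀ x ∈ Ici (0:ℝ), 0 ≤ p x * u x)
    (h0 : u' 0 = 0)
    (hu : MemLp u 2 (volume.restrict (Ioi (0:ℝ))))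
    (hu' : MemLp u' 2 (volume.restrict (Ioi (0:ℝ))))
    (hf : MemLp f 2 (volume.restrict (Ioi (0:ℝ)))) :
    0 ≤ ∫ x in Ioi (0:ℝ), f x * u x := by
  -- continuity
  have hcu : ContinuousOn u (Ici (0:ℝ)) := fun x hx => (hd x hx).continuousAt.continuousWithinAt
  have hcu' : ContinuousOn u' (Ici (0:ℝ)) := fun x hx => (hd' x hx).continuousAt.continuousWithinAt
  -- integrability of products on Ioi 0
  have hfu : IntegrableOn (fun x => f x * u x) (Ioi (0:ℝ)) := mulInt hf hu
  have huu' : IntegrableOn (fun x => u x * u' x) (Ioi (0:ℝ)) := mulInt hu hu'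
  -- for each R ≥ 0, the interval integral identity
  have main : ∀ R : ℝ, 0 ≤ R → -(u R * u' R) ≤ ∫ x in (0:ℝ)..R, f x * u x := by
    intro R hR
    have hsub : Icc (0:ℝ) R ⊆ Ici 0 := Icc_subset_Ici_self
    have hIocsub : Ioc (0:ℝ) R ⊆ Ici 0 := Ioc_subset_Icc_self.trans hsub
    -- interval integrability pieces
    have hIfu : IntervalIntegrable (fun x => f x * u x) volume 0 R := by
      rw [intervalIntegrable_iff, uIoc_of_le hR]
      exact hfu.mono_set Ioc_subset_Ioi_self
    have hIcts : IntervalIntegrable (fun x => u' x ^ 2 + γ * u x ^ 2 + p x * u x) volume 0 R := by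
      apply ContinuousOn.intervalIntegrable
      rw [uIcc_of_le hR]
      exact ContinuousOn.add (ContinuousOn.add
        ((hcu'.mono hsub).pow 2) (continuousOn_const.mul ((hcu.mono hsub).pow 2)))
        ((hp.mono hsub).mul (hcu.mono hsub))
    -- FTC for u * u'
    have hftc : ∫ x in (0:ℝ)..R, (u' x * u' x + u x * u'' x)
        = u R * u' R - u 0 * u' 0 := by
      apply intervalIntegral.integral_eq_sub_of_hasDerivAt
      · intro x hx
        rw [uIcc_of_le hR] at hx
        exact (hd x (hsub hx)).mul (hd' x (hsub hx))
      · have hE : IntervalIntegrable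
            (fun x => u' x ^ 2 + γ * u x ^ 2 + p x * u x - f x * u x) volume 0 R :=
          hIcts.sub hIfu
        rw [intervalIntegrable_iff, uIoc_of_le hR] at hE ⊢
        exact hE.congr_fun
          (fun x hx => by have := heq x (hIocsub hx); simp only [this]; ring)
          measurableSet_Ioc
    have heqint : ∫ x in (0:ℝ)..R, (u' x * u' x + u x * u'' x)
        = ∫ x in (0:ℝ)..R, (u' x ^ 2 + γ * u x ^ 2 + p x * u x - f x * u x) := by
      apply intervalIntegral.integral_congr
      intro x hx
      rw [uIcc_of_le hR] at hx
      have := heq x (hsub hx)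
      simp only [this]; ring
    have hsplit : ∫ x in (0:ℝ)..R, (u' x ^ 2 + γ * u x ^ 2 + p x * u x - f x * u x)
        = (∫ x in (0:ℝ)..R, (u' x ^ 2 + γ * u x ^ 2 + p x * u x))
          - ∫ x in (0:ℝ)..R, f x * u x :=
      intervalIntegral.integral_sub hIcts hIfu
    have hnonneg : 0 ≤ ∫ x in (0:ℝ)..R, (u' x ^ 2 + γ * u x ^ 2 + p x * u x) := by
      apply intervalIntegral.integral_nonneg hR
      intro x hx
      have hx' : x ∈ Ici (0:ℝ) := hsub hx
      have := hpu x hx'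
      positivity
    have : u R * u' R - u 0 * u' 0
        = (∫ x in (0:ℝ)..R, (u' x ^ 2 + γ * u x ^ 2 + p x * u x))
          - ∫ x in (0:ℝ)..R, f x * u x := by
      rw [← hsplit, ← heqint, hftc]
    rw [h0] at this
    nlinarith [this, hnonneg]
  -- tendsto
  have htend : Tendsto (fun R => ∫ x in (0:ℝ)..R, f x * u x) atTop
      (nhds (∫ x in Ioi (0:ℝ), f x * u x)) :=
    intervalIntegral_tendsto_integral_Ioi 0 hfu tendsto_id
  -- conclude: for each ε > 0, find R large with |u R * u' R| < ε and integral close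
  rw [← neg_nonpos, ← not_lt]
  intro hneg
  set I := ∫ x in Ioi (0:ℝ), f x * u x with hI
  set ε := -I with hε
  have hε2 : 0 < ε / 2 := by positivity
  -- frequently |u R * u' R| small
  have hfreq : ∃ᶠ R in atTop, |u R * u' R| < ε / 2 := by
    by_contra hcon
    rw [not_frequently] at hcon
    rw [eventually_atTop] at hcon
    obtain ⟨M, hM⟩ := hcon
    have hInt : IntegrableOn (fun x => u x * u' x) (Ioi (max M 0)) :=
      huu'.mono_set (Ioi_subset_Ioi (le_max_right _ _))
    have : Integrable (fun _ : ℝ => ε / 2) (volume.restrict (Ioi (max M 0))) := by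
      apply hInt.norm.mono' aestronglyMeasurable_const
      filter_upwards [ae_restrict_mem measurableSet_Ioi] with x hx
      have hx' : M ≤ x := le_of_lt (lt_of_le_of_lt (le_max_left _ _) hx)
      have h5 := hM x hx'
      rw [not_lt] at h5
      rw [Real.norm_eq_abs, Real.norm_eq_abs, abs_of_pos hε2]
      exact h5
    rw [integrable_const_iff] at this
    rcases this with h | h
    · exact hε2.ne' h
    · rw [isFiniteMeasure_restrict] at h; simp at h
  -- choose R with both
  have hclose : ∀ᶠ R in atTop, |(∫ x in (0:ℝ)..R, f x * u x) - I| < ε / 2 := by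
    have := htend
    rw [Metric.tendsto_atTop] at this
    obtain ⟨N, hN⟩ := this (ε / 2) hε2
    rw [eventually_atTop]
    exact ⟨N, fun R hR => hN R hR⟩
  have hR0 : ∀ᶠ R in atTop, (0:ℝ) ≤ R := eventually_ge_atTop 0
  obtain ⟨R, h1, h2, h3⟩ := (hfreq.and_eventually (hclose.and hR0)).exists
  have hmain := main R h3
  have ha := (abs_lt.mp h1).2
  have hb := (abs_lt.mp h2).2
  linarith

/-- `IsSol γ w v v' v''` : `v` solves `v'' − γv − v³ + w = 0` on `[0,∞)` with Neumann
condition at `0` and decay at infinity, with `v` and `v'` in `L²(0,∞)`. -/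
def IsSol (γ : ℝ) (w v v' v'' : ℝ → ℝ) : Prop :=
  (∀ x ∈ Ici (0:ℝ), HasDerivAt v (v' x) x) ∧
  (∀ x ∈ Ici (0:ℝ), HasDerivAt v' (v'' x) x) ∧
  (∀ x ∈ Ici (0:ℝ), v'' x - γ * v x - v x ^ 3 + w x = 0) ∧
  v' 0 = 0 ∧ Tendsto v atTop (nhds 0) ∧
  MemLp v 2 (volume.restrict (Ioi (0:ℝ))) ∧
  MemLp v' 2 (volume.restrict (Ioi (0:ℝ)))

/-- `∫₀^∞ w·Nw ≥ 0` for every `w ∈ H¹(0,∞)`, and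
`∫₀^∞ (w₁ − w₂)(Nw₁ − Nw₂) ≥ 0`; i.e. `N` is monotone in the `L²` pairing. -/
theorem statement8
    (γ : ℝ) (hγ : 0 < γ) (w₁ w₂ v₁ v₁' v₁'' v₂ v₂' v₂'' : ℝ → ℝ)
    (hw₁ : MemLp w₁ 2 (volume.restrict (Ioi (0:ℝ))))
    (hw₂ : MemLp w₂ 2 (volume.restrict (Ioi (0:ℝ))))
    (hw₁H1 : ∃ w₁' : ℝ → ℝ, (∀ x ∈ Ioi (0:ℝ), HasDerivAt w₁ (w₁' x) x) ∧
      MemLp w₁' 2 (volume.restrict (Ioi (0:ℝ))))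
    (hw₂H1 : ∃ w₂' : ℝ → ℝ, (∀ x ∈ Ioi (0:ℝ), HasDerivAt w₂ (w₂' x) x) ∧
      MemLp w₂' 2 (volume.restrict (Ioi (0:ℝ))))
    (hsol₁ : IsSol γ w₁ v₁ v₁' v₁'')
    (hsol₂ : IsSol γ w₂ v₂ v₂' v₂'') :
    (0 ≤ ∫ x in Ioi (0:ℝ), w₁ x * v₁ x) ∧
    (0 ≤ ∫ x in Ioi (0:ℝ), (w₁ x - w₂ x) * (v₁ x - v₂ x)) := by
  obtain ⟨hd₁, hd₁', heq₁, h0₁, -, hL₁, hL₁'⟩ := hsol₁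
  obtain ⟨hd₂, hd₂', heq₂, h0₂, -, hL₂, hL₂'⟩ := hsol₂
  have hcu₁ : ContinuousOn v₁ (Ici (0:ℝ)) := fun x hx => (hd₁ x hx).continuousAt.continuousWithinAt
  have hcu₂ : ContinuousOn v₂ (Ici (0:ℝ)) := fun x hx => (hd₂ x hx).continuousAt.continuousWithinAt
  constructor
  · apply key γ hγ.le w₁ v₁ v₁' v₁'' (fun x => v₁ x ^ 3) hd₁ hd₁'
    · intro x hx
      have := heq₁ x hx
      linarith
    · exact hcu₁.pow 3
    · intro x hx
      have h : v₁ x ^ 3 * v₁ x = (v₁ x ^ 2) ^ 2 := by ring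
      rw [h]; positivity
    · exact h0₁
    · exact hL₁
    · exact hL₁'
    · exact hw₁
  · apply key γ hγ.le (fun x => w₁ x - w₂ x) (fun x => v₁ x - v₂ x)
      (fun x => v₁' x - v₂' x) (fun x => v₁'' x - v₂'' x)
      (fun x => v₁ x ^ 3 - v₂ x ^ 3)
    · exact fun x hx => (hd₁ x hx).sub (hd₂ x hx)
    · exact fun x hx => (hd₁' x hx).sub (hd₂' x hx)
    · intro x hx
      have h1 := heq₁ x hx
      have h2 := heq₂ x hx
      linarith
    · exact (hcu₁.pow 3).sub (hcu₂.pow 3)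
    · intro x hx
      nlinarith [sq_nonneg (v₁ x - v₂ x), sq_nonneg (v₁ x + v₂ x), sq_nonneg (v₁ x), sq_nonneg (v₂ x)]
    · simp [h0₁, h0₂]
    · exact hL₁.sub hL₂
    · exact hL₁'.sub hL₂'
    · exact hw₁.sub hw₂
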